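/- For every t in the interval, D_e(t) is symmetric, and D_e′(t) − 2 C_e(t) is skew-symmetric; moreover, if D(t) is positive definite then D_e(t) is positive definite. (Transfer of the skew-symmetry property of Ḋ − 2C under the change of coordinates by J.) -/

import Mathlib

open Matrix

attribute [local instance] Matrix.normedAddCommGroup Matrix.normedSpace

theorem hasDerivAt_matrix {n : ℕ} {A : ℝ → Matrix (Fin n) (Fin n) ℝ}
    {A' : Matrix (Fin n) (Fin n) ℝ} {t : ℝ} :
    HasDerivAt A A' t ↔ ∀ i j, HasDerivAt (fun s => A s i j) (A' i j) t := by
  constructor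
  · intro h i j
    exact hasDerivAt_pi.mp (hasDerivAt_pi.mp h i) j
  · intro h
    exact hasDerivAt_pi.mpr fun i => hasDerivAt_pi.mpr fun j => h i j

theorem differentiableAt_matrix {n : ℕ} {A : ℝ → Matrix (Fin n) (Fin n) ℝ} {t : ℝ} :
    DifferentiableAt ℝ A t ↔ ∀ i j, DifferentiableAt ℝ (fun s => A s i j) t := by
  constructor
  · intro h i j
    exact differentiableAt_pi.mp (differentiableAt_pi.mp h i) j
  · intro h
    exact differentiableAt_pi.mpr fun i => differentiableAt_pi.mpr fun j => h i j

theorem HasDerivAt.matMul {n : ℕ} {A B : ℝ → Matrix (Fin n) (Fin n) ℝ}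
    {A' B' : Matrix (Fin n) (Fin n) ℝ} {t : ℝ}
    (hA : HasDerivAt A A' t) (hB : HasDerivAt B B' t) :
    HasDerivAt (fun s => A s * B s) (A' * B t + A t * B') t := by
  rw [hasDerivAt_matrix] at hA hB ⊢
  intro i j
  simp only [Matrix.mul_apply, Matrix.add_apply]
  have h : HasDerivAt (fun s => ∑ k, A s i k * B s k j)
      (∑ k, (A' i k * B t k j + A t i k * B' k j)) t :=
    HasDerivAt.fun_sum fun k _ => (hA i k).mul (hB k j)
  simpa [Finset.sum_add_distrib] using h

theorem HasDerivAt.matTranspose {n : ℕ} {A : ℝ → Matrix (Fin n) (Fin n) ℝ}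
    {A' : Matrix (Fin n) (Fin n) ℝ} {t : ℝ} (hA : HasDerivAt A A' t) :
    HasDerivAt (fun s => (A s)ᵀ) A'ᵀ t := by
  rw [hasDerivAt_matrix] at hA ⊢
  intro i j
  simpa using hA j i

theorem differentiableAt_matrix_det {n : ℕ} {A : ℝ → Matrix (Fin n) (Fin n) ℝ} {t : ℝ}
    (h : ∀ i j, DifferentiableAt ℝ (fun s => A s i j) t) :
    DifferentiableAt ℝ (fun s => (A s).det) t := by
  simp only [Matrix.det_apply, Units.smul_def, zsmul_eq_mul]
  exact DifferentiableAt.fun_sum fun σ _ =>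
    (DifferentiableAt.fun_finsetProd fun i _ => h (σ i) i).const_mul _

theorem differentiableAt_matrix_inv {n : ℕ} {J : ℝ → Matrix (Fin n) (Fin n) ℝ} {t : ℝ}
    (hJ : DifferentiableAt ℝ J t) (h : (J t).det ≠ 0) :
    DifferentiableAt ℝ (fun s => (J s)⁻¹) t := by
  rw [differentiableAt_matrix] at hJ ⊢
  intro i j
  have hdet : DifferentiableAt ℝ (fun s => (J s).det) t := differentiableAt_matrix_det hJ
  have hadj : DifferentiableAt ℝ (fun s => (J s).adjugate i j) t := by
    simp only [Matrix.adjugate_apply]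
    apply differentiableAt_matrix_det
    intro k l
    by_cases hk : k = j
    · simp [Matrix.updateRow_apply, hk]
    · simpa [Matrix.updateRow_apply, hk] using hJ k l
  have heq : (fun s => (J s)⁻¹ i j) = fun s => ((J s).det)⁻¹ * (J s).adjugate i j := by
    funext s
    rw [Matrix.inv_def, Matrix.smul_apply, Ring.inverse_eq_inv, smul_eq_mul]
  rw [heq]
  exact (hdet.inv h).mul hadj


/-- Transfer of the skew-symmetry property of `Ḋ − 2C` under the change
of coordinates by `J`: for `D_e = J⁻ᵀ D J⁻¹` and
`C_e = J⁻ᵀ C J⁻¹ + J⁻ᵀ D (d/dt)(J⁻¹)`, at every `t` in the open interval `I`,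
`D_e(t)` is symmetric, `D_e′(t) − 2 C_e(t)` is skew-symmetric, and `D_e(t)` is
positive definite whenever `D(t)` is. -/
theorem stmt_6 {n : ℕ} (hn : 1 ≤ n) (a b : ℝ)
    (J D C : ℝ → Matrix (Fin n) (Fin n) ℝ)
    (hJdiff : DifferentiableOn ℝ J (Set.Ioo a b))
    (hDdiff : DifferentiableOn ℝ D (Set.Ioo a b))
    (hCdiff : DifferentiableOn ℝ C (Set.Ioo a b))
    (hJinv : ∀ t ∈ Set.Ioo a b, IsUnit (J t).det)
    (hDsymm : ∀ t ∈ Set.Ioo a b, (D t).IsSymm)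
    (hskew : ∀ t ∈ Set.Ioo a b, (deriv D t - 2 • C t)ᵀ = -(deriv D t - 2 • C t))
    (De Ce : ℝ → Matrix (Fin n) (Fin n) ℝ)
    (hDe : ∀ t, De t = (J t)⁻¹ᵀ * D t * (J t)⁻¹)
    (hCe : ∀ t, Ce t = (J t)⁻¹ᵀ * C t * (J t)⁻¹ +
      (J t)⁻¹ᵀ * D t * deriv (fun s => (J s)⁻¹) t) :
    ∀ t ∈ Set.Ioo a b,
      (De t).IsSymm ∧
      (deriv De t - 2 • Ce t)ᵀ = -(deriv De t - 2 • Ce t) ∧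
      ((D t).PosDef → (De t).PosDef) := by
  intro t ht
  have hnhds : Set.Ioo a b ∈ nhds t := isOpen_Ioo.mem_nhds ht
  have hJt : DifferentiableAt ℝ J t := (hJdiff t ht).differentiableAt hnhds
  have hDt : DifferentiableAt ℝ D t := (hDdiff t ht).differentiableAt hnhds
  have hdet0 : (J t).det ≠ 0 := (hJinv t ht).ne_zero
  have hDsym : (D t)ᵀ = D t := (hDsymm t ht).eq
  set K := deriv (fun s => (J s)⁻¹) t with hK
  set P := (J t)⁻¹ with hP
  have hKd : HasDerivAt (fun s => (J s)⁻¹) K t :=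
    (differentiableAt_matrix_inv hJt hdet0).hasDerivAt
  have hKT : HasDerivAt (fun s => (J s)⁻¹ᵀ) Kᵀ t := hKd.matTranspose
  have hD' : HasDerivAt D (deriv D t) t := hDt.hasDerivAt
  have hDeEq : De = fun s => (J s)⁻¹ᵀ * D s * (J s)⁻¹ := funext hDe
  have hDeDer : HasDerivAt De
      ((Kᵀ * D t + Pᵀ * deriv D t) * P + (Pᵀ * D t) * K) t := by
    rw [hDeEq]
    exact (hKT.matMul hD').matMul hKd
  have hd : deriv De t = (Kᵀ * D t + Pᵀ * deriv D t) * P + (Pᵀ * D t) * K :=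
    hDeDer.deriv
  set W := deriv D t - 2 • C t with hWdef
  have hW : Wᵀ = -W := hskew t ht
  refine ⟨?_, ?_, ?_⟩
  · show (De t)ᵀ = De t
    rw [hDe]
    simp [Matrix.transpose_mul, Matrix.mul_assoc, hDsym]
  · have hX : deriv De t - 2 • Ce t = Kᵀ * D t * P + Pᵀ * W * P - Pᵀ * D t * K := by
      rw [hd, hCe, hWdef, ← hK, ← hP]
      simp only [two_smul]
      noncomm_ring
    rw [hX]
    simp only [Matrix.transpose_sub, Matrix.transpose_add, Matrix.transpose_mul,
      Matrix.transpose_transpose, hW, hDsym]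
    noncomm_ring
  · intro hpd
    have hPdet : P.det ≠ 0 := by
      rw [hP, Matrix.det_nonsing_inv, Ring.inverse_eq_inv]
      exact inv_ne_zero hdet0
    have hDet : De t = Pᵀ * D t * P := by rw [hDe, hP]
    rw [Matrix.posDef_iff_dotProduct_mulVec]
    constructor
    · show (De t)ᴴ = De t
      rw [hDet]
      have : (Pᵀ * D t * P)ᴴ = (Pᵀ * D t * P)ᵀ := rfl
      rw [this]
      simp [Matrix.transpose_mul, Matrix.mul_assoc, hDsym]
    · intro x hx
      have hy : P *ᵥ x ≠ 0 := by
        intro h0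
        exact hx (Matrix.eq_zero_of_mulVec_eq_zero hPdet h0)
      have := (Matrix.posDef_iff_dotProduct_mulVec.mp hpd).2 hy
      rw [hDet]
      have hcalc : star x ⬝ᵥ ((Pᵀ * D t * P) *ᵥ x)
          = star (P *ᵥ x) ⬝ᵥ (D t *ᵥ (P *ᵥ x)) := by
        simp only [star_trivial, ← Matrix.mulVec_mulVec, Matrix.dotProduct_mulVec,
          Matrix.vecMul_transpose]
      rw [hcalc]
      exact this
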